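/- Fix k ≥ 1, truth values y ∈ {0,1}^3, and configuration basis numbers (k'_s) of weight k' and (k''_s) of weight k'' with k'+k'' = k. Then Σ over all partitions [k] = K' ⊔ K'' with |K'| = k', |K''| = k'' of |Z(y, K', k', K'', k'')| equals (∏_{s∈{0,1}^3} C(k'_s + k''_s, k'_s)) · |Z(y, k'+k'')|, where Z(y, K', k', K'', k'') is the set of triples of k-bit strings whose truth values under a fixed truth table T: {0,1}^k → {0,1} are y, whose restriction to K' satisfies configuration (k'_s), and whose restriction to K'' satisfies configuration (k''_s); and Z(y, k) is the set of triples with truth values y and configuration basis numbers k. -/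

import Mathlib

/-- The configuration basis numbers of a triple of `k`-bit strings restricted to a set `K`
of positions: `tripleCfg K w s` counts the positions `j ∈ K` where the joint bit pattern of
the triple `w` equals `s`. -/
def tripleCfg {k : ℕ} (K : Finset (Fin k))
    (w : (Fin k → Bool) × (Fin k → Bool) × (Fin k → Bool)) (s : Bool × Bool × Bool) : ℕ :=
  (K.filter (fun j => (w.1 j, w.2.1 j, w.2.2 j) = s)).card

open Finset in
-- counting lemma: number of subsets with prescribed fiber sizes
lemma count_subsets {α S : Type*} [Fintype α] [DecidableEq α] [Fintype S] [DecidableEq S]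
    (f : α → S) (t : S → ℕ) :
    ((Finset.univ : Finset α).powerset.filter
        (fun K => ∀ s, (K.filter (fun j => f j = s)).card = t s)).card
      = ∏ s, ((Finset.univ.filter (fun j => f j = s)).card).choose (t s) := by
  have hB : (∏ s, ((Finset.univ.filter (fun j => f j = s)).card).choose (t s))
      = (Fintype.piFinset (fun s =>
          (Finset.univ.filter (fun j => f j = s)).powersetCard (t s))).card := by
    rw [Fintype.card_piFinset]
    exact Finset.prod_congr rfl (fun s _ => (Finset.card_powersetCard _ _).symm)
  rw [hB]
  apply Finset.card_nbij' (i := fun K => fun s => K.filter (fun j => f j = s))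
    (j := fun g => Finset.univ.biUnion g)
  · intro K hK
    simp only [mem_coe, mem_filter, mem_powerset] at hK
    simp only [mem_coe, Fintype.mem_piFinset, mem_powersetCard]
    intro s
    exact ⟨fun j hj => by simp only [mem_filter] at hj ⊢; exact ⟨mem_univ j, hj.2⟩, hK.2 s⟩
  · intro g hg
    simp only [mem_coe, Fintype.mem_piFinset, mem_powersetCard] at hg
    have hsub : ∀ s, g s ⊆ Finset.univ.filter (fun j => f j = s) := fun s => (hg s).1
    have key : ∀ s, (Finset.univ.biUnion g).filter (fun j => f j = s) = g s := by
      intro s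
      ext j
      simp only [mem_filter, mem_biUnion, mem_univ, true_and]
      constructor
      · rintro ⟨⟨s', hj⟩, hfs⟩
        have := (mem_filter.mp (hsub s' hj)).2
        rw [hfs] at this; rw [this]; exact hj
      · intro hj
        exact ⟨⟨s, hj⟩, (mem_filter.mp (hsub s hj)).2⟩
    simp only [mem_coe, mem_filter, mem_powerset]
    exact ⟨subset_univ _, fun s => by rw [key s]; exact (hg s).2⟩
  · intro K hK
    ext j
    simp only [mem_biUnion, mem_univ, true_and, mem_filter]
    constructor
    · rintro ⟨s, hj, _⟩; exact hj
    · intro hj; exact ⟨f j, hj, rfl⟩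
  · intro g hg
    simp only [mem_coe, Fintype.mem_piFinset, mem_powersetCard] at hg
    funext s
    ext j
    simp only [mem_filter, mem_biUnion, mem_univ, true_and]
    constructor
    · rintro ⟨⟨s', hj⟩, hfs⟩
      have := (mem_filter.mp ((hg s').1 hj)).2
      rw [hfs] at this; rw [this]; exact hj
    · intro hj
      exact ⟨⟨s, hj⟩, (mem_filter.mp ((hg s).1 hj)).2⟩

-- additivity over complement
lemma tripleCfg_add {k : ℕ} (K : Finset (Fin k))
    (w : (Fin k → Bool) × (Fin k → Bool) × (Fin k → Bool)) (s : Bool × Bool × Bool) :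
    tripleCfg Finset.univ w s = tripleCfg K w s + tripleCfg Kᶜ w s := by
  unfold tripleCfg
  rw [← Finset.union_compl K, Finset.filter_union]
  exact Finset.card_union_of_disjoint
    (Finset.disjoint_filter_filter disjoint_compl_right)

lemma card_eq_sum_tripleCfg {k : ℕ} (K : Finset (Fin k))
    (w : (Fin k → Bool) × (Fin k → Bool) × (Fin k → Bool)) :
    K.card = ∑ s : Bool × Bool × Bool, tripleCfg K w s :=
  Finset.card_eq_sum_card_fiberwise (f := fun j => (w.1 j, w.2.1 j, w.2.2 j))
    (fun x _ => Finset.mem_univ _)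

/-- Relating fine and coarse partitionings of bitstring triplets: summing over all
bipartitions `[k] = K' ⊔ K''` with `|K'| = k'`, `|K''| = k''` the number of triples of
`k`-bit strings with truth values `y`, restriction to `K'` of configuration `cfg'` and
restriction to `K''` of configuration `cfg''`, gives
`(∏_s C(cfg'_s + cfg''_s, cfg'_s))` times the number of triples with truth values `y` and
(global) configuration `cfg' + cfg''`. -/
theorem fine_coarse_partition_relation (k : ℕ) (hk : 1 ≤ k)
    (T : (Fin k → Bool) → Bool) (y : Bool × Bool × Bool)
    (k' k'' : ℕ) (hk'' : k' + k'' = k)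
    (cfg' cfg'' : Bool × Bool × Bool → ℕ)
    (h' : ∑ s, cfg' s = k') (h'' : ∑ s, cfg'' s = k'') :
    ∑ K ∈ Finset.powersetCard k' (Finset.univ : Finset (Fin k)),
      ((Finset.univ :
          Finset ((Fin k → Bool) × (Fin k → Bool) × (Fin k → Bool))).filter
        (fun w =>
          (T w.1, T w.2.1, T w.2.2) = y ∧
          (∀ s, tripleCfg K w s = cfg' s) ∧
          (∀ s, tripleCfg Kᶜ w s = cfg'' s))).card
    = (∏ s : Bool × Bool × Bool, Nat.choose (cfg' s + cfg'' s) (cfg' s)) *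
        ((Finset.univ :
            Finset ((Fin k → Bool) × (Fin k → Bool) × (Fin k → Bool))).filter
          (fun w =>
            (T w.1, T w.2.1, T w.2.2) = y ∧
            (∀ s, tripleCfg Finset.univ w s = cfg' s + cfg'' s))).card := by
  classical
  simp_rw [Finset.card_filter]
  rw [Finset.sum_comm]
  rw [Finset.mul_sum]
  apply Finset.sum_congr rfl
  intro w _
  -- per-w: sum over K of indicator
  rw [← Finset.card_filter]
  by_cases hQ : (T w.1, T w.2.1, T w.2.2) = y ∧
      (∀ s, tripleCfg Finset.univ w s = cfg' s + cfg'' s)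
  · obtain ⟨hy, hn⟩ := hQ
    have hset : (Finset.powersetCard k' (Finset.univ : Finset (Fin k))).filter
        (fun K => (T w.1, T w.2.1, T w.2.2) = y ∧
          (∀ s, tripleCfg K w s = cfg' s) ∧ (∀ s, tripleCfg Kᶜ w s = cfg'' s))
        = (Finset.univ : Finset (Fin k)).powerset.filter
          (fun K => ∀ s, (K.filter (fun j => (w.1 j, w.2.1 j, w.2.2 j) = s)).card = cfg' s) := by
      ext K
      simp only [Finset.mem_filter, Finset.mem_powersetCard, Finset.mem_powerset]
      constructor
      · rintro ⟨⟨hsub, _⟩, _, h1, _⟩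
        exact ⟨hsub, h1⟩
      · rintro ⟨hsub, h1⟩
        refine ⟨⟨hsub, ?_⟩, hy, h1, ?_⟩
        · rw [card_eq_sum_tripleCfg K w, ← h']
          exact Finset.sum_congr rfl (fun s _ => h1 s)
        · intro s
          have hadd := tripleCfg_add K w s
          have h1' : tripleCfg K w s = cfg' s := h1 s
          rw [hn s, h1'] at hadd
          omega
    rw [hset, count_subsets]
    have hfil : ∀ s, ((Finset.univ : Finset (Fin k)).filter
        (fun j => (w.1 j, w.2.1 j, w.2.2 j) = s)).card = cfg' s + cfg'' s := fun s => hn s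
    rw [Finset.prod_congr rfl (fun s _ => by rw [hfil s])]
    simp [hy, hn]
  · have hempty : (Finset.powersetCard k' (Finset.univ : Finset (Fin k))).filter
        (fun K => (T w.1, T w.2.1, T w.2.2) = y ∧
          (∀ s, tripleCfg K w s = cfg' s) ∧ (∀ s, tripleCfg Kᶜ w s = cfg'' s)) = ∅ := by
      rw [Finset.filter_eq_empty_iff]
      rintro K _ ⟨hy, h1, h2⟩
      exact hQ ⟨hy, fun s => by rw [tripleCfg_add K w s, h1 s, h2 s]⟩
    rw [hempty, Finset.card_empty, if_neg, mul_zero]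
    rintro ⟨h1, h2⟩
    exact hQ ⟨h1, fun s => by obtain ⟨a, b, c⟩ := s; cases a <;> cases b <;> cases c <;> tauto⟩
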